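/- Let m be a positive integer with m ≡ 7 (mod 12) all of whose prime divisors are congruent to 1 or 7 mod 12. Then the number of pairs of coprime integers (x,y) with m = 3x² + 4y² is 2^{τ(m)+1}, where τ(m) is the number of distinct prime divisors of m. -/

import Mathlib

/-! Eisenstein integers over an arbitrary commutative ring: pairs (a,b) ↦ a + bω, ω² = -1-ω. -/

structure Eis (R : Type) where
  re : R
  im : R
deriving DecidableEq

namespace Eis

variable {R : Type} [CommRing R]

@[ext] theorem ext' {x y : Eis R} (h1 : x.re = y.re) (h2 : x.im = y.im) : x = y := by
  cases x; cases y; simp_all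

instance : Zero (Eis R) := ⟨⟨0, 0⟩⟩
instance : One (Eis R) := ⟨⟨1, 0⟩⟩
instance : Add (Eis R) := ⟨fun x y => ⟨x.re + y.re, x.im + y.im⟩⟩
instance : Neg (Eis R) := ⟨fun x => ⟨-x.re, -x.im⟩⟩
instance : Sub (Eis R) := ⟨fun x y => ⟨x.re - y.re, x.im - y.im⟩⟩
instance : Mul (Eis R) :=
  ⟨fun x y => ⟨x.re * y.re - x.im * y.im, x.re * y.im + x.im * y.re - x.im * y.im⟩⟩

@[simp] theorem zero_re : (0 : Eis R).re = 0 := rfl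
@[simp] theorem zero_im : (0 : Eis R).im = 0 := rfl
@[simp] theorem one_re : (1 : Eis R).re = 1 := rfl
@[simp] theorem one_im : (1 : Eis R).im = 0 := rfl
@[simp] theorem add_re (x y : Eis R) : (x + y).re = x.re + y.re := rfl
@[simp] theorem add_im (x y : Eis R) : (x + y).im = x.im + y.im := rfl
@[simp] theorem neg_re (x : Eis R) : (-x).re = -x.re := rfl
@[simp] theorem neg_im (x : Eis R) : (-x).im = -x.im := rfl
@[simp] theorem sub_re (x y : Eis R) : (x - y).re = x.re - y.re := rfl
@[simp] theorem sub_im (x y : Eis R) : (x - y).im = x.im - y.im := rfl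
@[simp] theorem mul_re (x y : Eis R) : (x * y).re = x.re * y.re - x.im * y.im := rfl
@[simp] theorem mul_im (x y : Eis R) :
    (x * y).im = x.re * y.im + x.im * y.re - x.im * y.im := rfl

instance commRing : CommRing (Eis R) where
  add := (· + ·)
  add_assoc := by intros; ext <;> simp <;> ring
  zero := 0
  zero_add := by intros; ext <;> simp
  add_zero := by intros; ext <;> simp
  nsmul := nsmulRec
  add_comm := by intros; ext <;> simp <;> ring
  mul := (· * ·)
  left_distrib := by intros; ext <;> simp <;> ring
  right_distrib := by intros; ext <;> simp <;> ring
  zero_mul := by intros; ext <;> simp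
  mul_zero := by intros; ext <;> simp
  mul_assoc := by intros; ext <;> simp <;> ring
  one := 1
  one_mul := by intros; ext <;> simp
  mul_one := by intros; ext <;> simp
  neg := Neg.neg
  sub := Sub.sub
  sub_eq_add_neg := by intros; ext <;> simp <;> ring
  neg_add_cancel := by intros; ext <;> simp
  zsmul := zsmulRec
  mul_comm := by intros; ext <;> simp <;> ring

/-- Conjugation. -/
def conj (x : Eis R) : Eis R := ⟨x.re - x.im, -x.im⟩

@[simp] theorem conj_re (x : Eis R) : (conj x).re = x.re - x.im := rfl
@[simp] theorem conj_im (x : Eis R) : (conj x).im = -x.im := rfl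

theorem conj_mul (x y : Eis R) : conj (x * y) = conj x * conj y := by
  ext <;> simp <;> ring

/-- Norm. -/
def norm (x : Eis R) : R := x.re * x.re - x.re * x.im + x.im * x.im

theorem norm_mul (x y : Eis R) : norm (x * y) = norm x * norm y := by
  simp [norm]; ring

theorem mul_conj (x : Eis R) : x * conj x = ⟨norm x, 0⟩ := by
  ext <;> simp [norm] <;> ring

@[simp] theorem norm_one : norm (1 : Eis R) = 1 := by simp [norm]
@[simp] theorem norm_zero : norm (0 : Eis R) = 0 := by simp [norm]
theorem norm_conj (x : Eis R) : norm (conj x) = norm x := by simp [norm]; ring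

end Eis

/-! The Eisenstein integers proper. -/

abbrev EisZ := Eis ℤ

namespace EisZ

open Eis

/-- Coordinatewise map to `Eis ℚ`. -/
def toQ (x : EisZ) : Eis ℚ := ⟨(x.re : ℚ), (x.im : ℚ)⟩

@[simp] theorem toQ_re (x : EisZ) : (toQ x).re = (x.re : ℚ) := rfl
@[simp] theorem toQ_im (x : EisZ) : (toQ x).im = (x.im : ℚ) := rfl

theorem toQ_mul (x y : EisZ) : toQ (x * y) = toQ x * toQ y := by
  ext <;> simp [toQ] <;> push_cast <;> ring

theorem toQ_sub (x y : EisZ) : toQ (x - y) = toQ x - toQ y := by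
  ext <;> simp [toQ]

theorem toQ_inj {x y : EisZ} (h : toQ x = toQ y) : x = y := by
  have h1 := congrArg Eis.re h
  have h2 := congrArg Eis.im h
  simp at h1 h2
  ext <;> assumption

theorem norm_toQ (x : EisZ) : Eis.norm (toQ x) = ((Eis.norm x : ℤ) : ℚ) := by
  simp only [Eis.norm, toQ_re, toQ_im]
  push_cast
  ring

theorem norm_nonneg (x : EisZ) : 0 ≤ Eis.norm x := by
  have : 4 * Eis.norm x = (2 * x.re - x.im)^2 + 3 * x.im^2 := by simp [Eis.norm]; ring
  nlinarith [sq_nonneg (2 * x.re - x.im), sq_nonneg x.im]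

theorem norm_eq_zero_iff {x : EisZ} : Eis.norm x = 0 ↔ x = 0 := by
  constructor
  · intro h
    have h4 : (2 * x.re - x.im)^2 + 3 * x.im^2 = 0 := by
      have h5 : 4 * Eis.norm x = (2 * x.re - x.im)^2 + 3 * x.im^2 := by simp [Eis.norm]; ring
      omega
    have him : x.im = 0 := by nlinarith [sq_nonneg (2 * x.re - x.im), sq_nonneg x.im]
    have hre : x.re = 0 := by nlinarith [sq_nonneg (2 * x.re - x.im)]
    ext <;> assumption
  · rintro rfl; simp

theorem norm_pos {x : EisZ} (hx : x ≠ 0) : 0 < Eis.norm x := by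
  rcases lt_or_eq_of_le (norm_nonneg x) with h | h
  · exact h
  · exact absurd (norm_eq_zero_iff.mp h.symm) hx

instance instNontrivial : Nontrivial EisZ := ⟨⟨0, 1, by intro h; exact absurd (congrArg Eis.re h) (by simp)⟩⟩

instance : NoZeroDivisors EisZ := by
  constructor
  intro a b hab
  by_contra h
  push_neg at h
  have h1 := norm_pos h.1
  have h2 := norm_pos h.2
  have h3 : Eis.norm (a * b) = 0 := by rw [hab]; simp
  rw [Eis.norm_mul] at h3
  nlinarith

instance : IsDomain EisZ := NoZeroDivisors.to_isDomain EisZ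
/-- Division with rounding. -/
instance : Div EisZ :=
  ⟨fun x y =>
    ⟨round (((x * conj y).re : ℚ) / ((Eis.norm y : ℤ) : ℚ)),
     round (((x * conj y).im : ℚ) / ((Eis.norm y : ℤ) : ℚ))⟩⟩

theorem div_def (x y : EisZ) : x / y =
    ⟨round (((x * conj y).re : ℚ) / ((Eis.norm y : ℤ) : ℚ)),
     round (((x * conj y).im : ℚ) / ((Eis.norm y : ℤ) : ℚ))⟩ := rfl

instance : Mod EisZ := ⟨fun x y => x - y * (x / y)⟩

theorem mod_def (x y : EisZ) : x % y = x - y * (x / y) := rfl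

theorem normQ_nonneg (z : Eis ℚ) : 0 ≤ Eis.norm z := by
  have : 4 * Eis.norm z = (2 * z.re - z.im)^2 + 3 * z.im^2 := by simp [Eis.norm]; ring
  nlinarith [sq_nonneg (2 * z.re - z.im), sq_nonneg z.im]

theorem norm_mod_lt (x : EisZ) {y : EisZ} (hy : y ≠ 0) :
    Eis.norm (x % y) < Eis.norm y := by
  have hyQ : (0:ℚ) < ((Eis.norm y : ℤ) : ℚ) := by exact_mod_cast norm_pos hy
  have hne : ((Eis.norm y : ℤ) : ℚ) ≠ 0 := ne_of_gt hyQ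
  obtain ⟨z1, z2, hz1, hz2⟩ : ∃ z1 z2 : ℚ,
      z1 = (((x * conj y).re : ℤ) : ℚ) / ((Eis.norm y : ℤ) : ℚ) ∧
      z2 = (((x * conj y).im : ℤ) : ℚ) / ((Eis.norm y : ℤ) : ℚ) := ⟨_, _, rfl, rfl⟩
  have hq : x / y = (⟨round z1, round z2⟩ : EisZ) := by rw [div_def, hz1, hz2]
  have hYZ : toQ y * ⟨z1, z2⟩ = toQ x := by
    ext
    · show (y.re : ℚ) * z1 - (y.im : ℚ) * z2 = (x.re : ℚ)
      rw [hz1, hz2]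
      field_simp
      simp only [Eis.mul_re, Eis.mul_im, Eis.conj_re, Eis.conj_im, Eis.norm]
      push_cast
      ring
    · show (y.re : ℚ) * z2 + (y.im : ℚ) * z1 - (y.im : ℚ) * z2 = (x.im : ℚ)
      rw [hz1, hz2]
      field_simp
      simp only [Eis.mul_re, Eis.mul_im, Eis.conj_re, Eis.conj_im, Eis.norm]
      push_cast
      ring
  have key : toQ (x % y) = toQ y * ((⟨z1, z2⟩ : Eis ℚ) - toQ (x / y)) := by
    rw [mul_sub, hYZ, mod_def, toQ_sub, toQ_mul]
  have hre : |z1 - ((round z1 : ℤ) : ℚ)| ≤ 1/2 := abs_sub_round z1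
  have him : |z2 - ((round z2 : ℤ) : ℚ)| ≤ 1/2 := abs_sub_round z2
  have hsmall : Eis.norm ((⟨z1, z2⟩ : Eis ℚ) - toQ (x / y)) < 1 := by
    rw [hq]
    show (z1 - ((round z1 : ℤ) : ℚ)) * (z1 - ((round z1 : ℤ) : ℚ)) -
      (z1 - ((round z1 : ℤ) : ℚ)) * (z2 - ((round z2 : ℤ) : ℚ)) +
      (z2 - ((round z2 : ℤ) : ℚ)) * (z2 - ((round z2 : ℤ) : ℚ)) < 1
    have ha := abs_le.mp hre
    have hb := abs_le.mp him
    nlinarith [ha.1, ha.2, hb.1, hb.2]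
  have hlt : Eis.norm (toQ (x % y)) < Eis.norm (toQ y) := by
    rw [key, Eis.norm_mul]
    have hnp : (0:ℚ) < Eis.norm (toQ y) := by rw [norm_toQ]; exact hyQ
    calc Eis.norm (toQ y) * Eis.norm ((⟨z1, z2⟩ : Eis ℚ) - toQ (x / y))
        < Eis.norm (toQ y) * 1 := mul_lt_mul_of_pos_left hsmall hnp
      _ = Eis.norm (toQ y) := mul_one _
  rw [norm_toQ, norm_toQ] at hlt
  exact_mod_cast hlt

theorem natAbs_norm_mod_lt (x : EisZ) {y : EisZ} (hy : y ≠ 0) :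
    (Eis.norm (x % y)).natAbs < (Eis.norm y).natAbs := by
  have h1 := norm_mod_lt x hy
  have h2 := norm_nonneg (x % y)
  have h3 := norm_nonneg y
  omega

theorem norm_le_norm_mul_left (x : EisZ) {y : EisZ} (hy : y ≠ 0) :
    (Eis.norm x).natAbs ≤ (Eis.norm (x * y)).natAbs := by
  rw [Eis.norm_mul, Int.natAbs_mul]
  have := norm_pos hy
  have : 1 ≤ (Eis.norm y).natAbs := by omega
  exact Nat.le_mul_of_pos_right _ (by omega)

instance : EuclideanDomain EisZ :=
  { EisZ.instNontrivial with
    quotient := (· / ·)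
    remainder := (· % ·)
    quotient_zero := fun x => by
      simp only [div_def, Eis.norm_zero]
      ext <;> simp
    quotient_mul_add_remainder_eq := fun x y => by show y * (x / y) + (x - y * (x / y)) = x; ring
    r := fun a b => (Eis.norm a).natAbs < (Eis.norm b).natAbs
    r_wellFounded := (measure fun x : EisZ => (Eis.norm x).natAbs).wf
    remainder_lt := fun a b hb => natAbs_norm_mod_lt a hb
    mul_left_not_lt := fun a b hb => not_lt_of_ge (norm_le_norm_mul_left a hb) }


/-! ### Arithmetic in the Eisenstein integers -/

/-- The rational integer `n` as an Eisenstein integer. -/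
def ofInt (n : ℤ) : EisZ := ⟨n, 0⟩

@[simp] theorem ofInt_re (n : ℤ) : (ofInt n).re = n := rfl
@[simp] theorem ofInt_im (n : ℤ) : (ofInt n).im = 0 := rfl

theorem norm_ofInt (n : ℤ) : Eis.norm (ofInt n) = n * n := by simp [Eis.norm]

theorem ofInt_dvd_iff {n : ℤ} {α : EisZ} : ofInt n ∣ α ↔ n ∣ α.re ∧ n ∣ α.im := by
  constructor
  · rintro ⟨β, rfl⟩
    constructor
    · exact ⟨β.re, by simp⟩
    · exact ⟨β.im, by simp⟩
  · rintro ⟨⟨c, hc⟩, ⟨d, hd⟩⟩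
    exact ⟨⟨c, d⟩, by ext <;> simp [hc, hd]⟩

theorem dvd_norm_dvd {a b : EisZ} (h : a ∣ b) : Eis.norm a ∣ Eis.norm b := by
  obtain ⟨c, rfl⟩ := h
  exact ⟨Eis.norm c, Eis.norm_mul a c⟩

theorem conj_dvd_conj {a b : EisZ} (h : a ∣ b) : conj a ∣ conj b := by
  obtain ⟨c, rfl⟩ := h
  exact ⟨conj c, Eis.conj_mul a c⟩

@[simp] theorem conj_conj (a : EisZ) : conj (conj a) = a := by ext <;> simp

theorem isUnit_iff_norm {u : EisZ} : IsUnit u ↔ Eis.norm u = 1 := by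
  constructor
  · rintro ⟨v, rfl⟩
    have h : Eis.norm (v : EisZ) * Eis.norm ((v⁻¹ : EisZˣ) : EisZ) = 1 := by
      rw [← Eis.norm_mul]
      simp
    exact Int.eq_one_of_mul_eq_one_right (norm_nonneg _) h
  · intro h
    refine IsUnit.of_mul_eq_one (a := u) (conj u) ?_
    rw [mul_conj, h]
    rfl

theorem prime_of_norm_prime {π : EisZ} {p : ℕ} (hp : p.Prime)
    (hπ : Eis.norm π = (p : ℤ)) : Prime π := by
  rw [← irreducible_iff_prime]
  constructor
  · rw [isUnit_iff_norm, hπ]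
    exact_mod_cast hp.ne_one
  · intro a b hab
    have h : Eis.norm a * Eis.norm b = (p : ℤ) := by rw [← Eis.norm_mul, ← hab, hπ]
    have h2 : (Eis.norm a).natAbs * (Eis.norm b).natAbs = p := by
      have := congrArg Int.natAbs h
      rwa [Int.natAbs_mul, Int.natAbs_natCast] at this
    have ha := norm_nonneg a
    have hb := norm_nonneg b
    rcases (Nat.Prime.eq_one_or_self_of_dvd hp _ ⟨_, h2.symm⟩ :
        (Eis.norm a).natAbs = 1 ∨ (Eis.norm a).natAbs = p) with h3 | h3
    · left
      rw [isUnit_iff_norm]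
      omega
    · right
      rw [isUnit_iff_norm]
      have hp1 := hp.one_lt
      have h4 : p * (Eis.norm b).natAbs = p * 1 := by
        rw [h3] at h2
        rw [mul_one]
        exact h2
      have h5 : (Eis.norm b).natAbs = 1 := Nat.eq_of_mul_eq_mul_left (by omega) h4
      omega


/-- `π` is not associate to its conjugate when its norm is a prime `p ≡ 1 mod 3`. -/
theorem not_conj_dvd {π : EisZ} {p : ℕ} (hp : p.Prime) (hp3 : p % 3 = 1)
    (hπ : Eis.norm π = (p : ℤ)) : ¬ (conj π ∣ π) := by
  intro hdvd
  have hsum : conj π ∣ ofInt (2 * π.re - π.im) := by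
    have : ofInt (2 * π.re - π.im) = π + conj π := by ext <;> simp <;> ring
    rw [this]
    exact dvd_add hdvd dvd_rfl
  have hnorm : (p : ℤ) ∣ (2 * π.re - π.im) * (2 * π.re - π.im) := by
    have := dvd_norm_dvd hsum
    rwa [norm_conj, hπ, norm_ofInt] at this
  have hpZ : Prime (p : ℤ) := Nat.prime_iff_prime_int.mp hp
  have ht : (p : ℤ) ∣ 2 * π.re - π.im := by
    rcases hpZ.dvd_mul.mp hnorm with h | h <;> exact h
  have hid : (2 * π.re - π.im) * (2 * π.re - π.im) = 4 * Eis.norm π - 3 * (π.im * π.im) := by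
    simp [Eis.norm]; ring
  have h3 : (p : ℤ) ∣ 3 * (π.im * π.im) := by
    have h2 : (p : ℤ) ∣ 4 * Eis.norm π := by rw [hπ]; exact ⟨4, by ring⟩
    have h5 : 3 * (π.im * π.im) =
        4 * Eis.norm π - (2 * π.re - π.im) * (2 * π.re - π.im) := by linarith [hid]
    rw [h5]
    exact dvd_sub h2 hnorm
  have hp3' : ¬ ((p : ℤ) ∣ 3) := by
    intro h
    have h6 : p ∣ 3 := by exact_mod_cast h
    have h7 := Nat.le_of_dvd (by norm_num) h6
    have h8 := hp.two_le
    interval_cases p <;> omega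
  have him : (p : ℤ) ∣ π.im := by
    rcases hpZ.dvd_mul.mp h3 with h | h
    · exact absurd h hp3'
    · rcases hpZ.dvd_mul.mp h with h | h <;> exact h
  have hre : (p : ℤ) ∣ π.re := by
    have h2 : (p : ℤ) ∣ 2 * π.re := by
      have h6 := dvd_add ht him
      have h7 : 2 * π.re - π.im + π.im = 2 * π.re := by ring
      rwa [h7] at h6
    have hp2 : ¬ ((p : ℤ) ∣ 2) := by
      intro h
      have h6 : p ∣ 2 := by exact_mod_cast h
      have h7 := Nat.le_of_dvd (by norm_num) h6
      have h8 := hp.two_le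
      interval_cases p <;> omega
    rcases hpZ.dvd_mul.mp h2 with h | h
    · exact absurd h hp2
    · exact h
  -- then p^2 divides norm π = p, contradiction
  obtain ⟨a, ha⟩ := hre
  obtain ⟨b, hb⟩ := him
  have hdvd2 : (p : ℤ) * (p : ℤ) ∣ Eis.norm π :=
    ⟨a * a - a * b + b * b, by simp only [Eis.norm]; rw [ha, hb]; ring⟩
  rw [hπ] at hdvd2
  have : (p : ℤ) * (p : ℤ) ∣ (p : ℤ) := hdvd2
  have hple := Int.le_of_dvd (by exact_mod_cast hp.pos) this
  have hp1 : (1 : ℤ) < (p : ℤ) := by exact_mod_cast hp.one_lt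
  nlinarith

/-- Existence of an element of norm `p` for `p ≡ 1 mod 3`. -/
theorem exists_norm_eq {p : ℕ} (hp : p.Prime) (hp3 : p % 3 = 1) :
    ∃ π : EisZ, Eis.norm π = (p : ℤ) := by
  haveI : Fact p.Prime := ⟨hp⟩
  -- find t with p ∣ t² + 3
  obtain ⟨t, ht⟩ : ∃ t : ℤ, (p : ℤ) ∣ t ^ 2 + 3 := by
    have hcard : 3 ∣ Fintype.card (ZMod p)ˣ := by
      rw [ZMod.card_units_eq_totient, Nat.totient_prime hp]
      omega
    obtain ⟨x, hx⟩ := exists_prime_orderOf_dvd_card (G := (ZMod p)ˣ) 3 hcard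
    set z : ZMod p := (x : ZMod p) with hz
    have hz3 : z ^ 3 = 1 := by
      rw [hz, ← Units.val_pow_eq_pow_val, ← hx, pow_orderOf_eq_one, Units.val_one]
    have hz1 : z ≠ 1 := by
      intro h
      have : x = 1 := Units.ext h
      rw [this, orderOf_one] at hx
      omega
    have hquad : z ^ 2 + z + 1 = 0 := by
      have hfac : (z - 1) * (z ^ 2 + z + 1) = z ^ 3 - 1 := by ring
      rw [hz3, sub_self] at hfac
      rcases mul_eq_zero.mp hfac with h | h
      · exact absurd (by linear_combination h) hz1
      · exact h
    have hsq : (2 * z + 1) ^ 2 = -3 := by linear_combination 4 * hquad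
    refine ⟨((2 * z + 1 : ZMod p).val : ℤ), ?_⟩
    rw [← ZMod.intCast_zmod_eq_zero_iff_dvd]
    push_cast
    rw [ZMod.natCast_val, ZMod.cast_id]
    rw [hsq]
    ring
  -- the rational prime p is not prime in EisZ
  have hp2 : p ≠ 2 := by omega
  have hpodd : ¬ ((p:ℤ) ∣ 2) := by
    intro h
    have h6 : p ∣ 2 := by exact_mod_cast h
    have h7 := Nat.le_of_dvd (by norm_num) h6
    have h8 := hp.two_le
    interval_cases p <;> omega
  have hnotprime : ¬ Prime (ofInt (p : ℤ)) := by
    intro hP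
    have hα : ofInt (p : ℤ) ∣ (⟨t + 1, 2⟩ : EisZ) * conj ⟨t + 1, 2⟩ := by
      rw [mul_conj]
      have hn : Eis.norm (⟨t + 1, 2⟩ : EisZ) = t ^ 2 + 3 := by simp [Eis.norm]; ring
      rw [hn]
      obtain ⟨c, hc⟩ := ht
      exact ⟨ofInt c, by ext <;> simp [hc]⟩
    rcases hP.dvd_mul.mp hα with h | h <;>
      · rw [ofInt_dvd_iff] at h
        rcases h with ⟨h1, h2⟩
        simp at h2
        first
          | exact hpodd h2
          | (exact hpodd (by omega))
  have hnotunit : ¬ IsUnit (ofInt (p : ℤ)) := by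
    rw [isUnit_iff_norm, norm_ofInt]
    have := hp.one_lt
    nlinarith [hp.one_lt]
  have hnotirr : ¬ Irreducible (ofInt (p : ℤ)) := by
    intro h
    exact hnotprime (irreducible_iff_prime.mp h)
  rw [irreducible_iff] at hnotirr
  push_neg at hnotirr
  obtain ⟨a, b, hab, hu⟩ := hnotirr hnotunit
  have hnprod : Eis.norm a * Eis.norm b = (p : ℤ) * (p : ℤ) := by
    rw [← Eis.norm_mul, ← hab, norm_ofInt]
  have ha1 : Eis.norm a ≠ 1 := fun h => hu.1 (isUnit_iff_norm.mpr h)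
  have hb1 : Eis.norm b ≠ 1 := fun h => hu.2 (isUnit_iff_norm.mpr h)
  have hna := norm_nonneg a
  have hnb := norm_nonneg b
  have hAB : (Eis.norm a).natAbs * (Eis.norm b).natAbs = p * p := by
    have h9 := congrArg Int.natAbs hnprod
    rwa [Int.natAbs_mul, Int.natAbs_mul, Int.natAbs_natCast] at h9
  have hAdvd : (Eis.norm a).natAbs ∣ p ^ 2 := ⟨(Eis.norm b).natAbs, by rw [pow_two]; omega⟩
  obtain ⟨k, hk2, hA⟩ := (Nat.dvd_prime_pow hp).mp hAdvd
  have hA1 : (Eis.norm a).natAbs ≠ 1 := by omega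
  have hB1 : (Eis.norm b).natAbs ≠ 1 := by omega
  interval_cases k
  · simp at hA
    omega
  · exact ⟨a, by rw [pow_one] at hA; omega⟩
  · exfalso
    rw [hA, pow_two] at hAB
    have hp0 := hp.pos
    have : (Eis.norm b).natAbs = 1 := by
      have h10 : p * p * (Eis.norm b).natAbs = p * p * 1 := by omega
      exact Nat.eq_of_mul_eq_mul_left (by positivity) h10
    omega


/-! ### Primitive elements -/

/-- An Eisenstein integer is primitive if its coordinates are coprime. -/
def prim (α : EisZ) : Prop := IsCoprime α.re α.im

theorem prim_not_int_dvd {α : EisZ} (h : prim α) {q : ℤ} (hq : ¬ IsUnit q) :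
    ¬ (ofInt q ∣ α) := by
  intro hd
  rw [ofInt_dvd_iff] at hd
  exact hq (h.isUnit_of_dvd' hd.1 hd.2)

theorem prim_of_mul {δ β : EisZ} (h : prim (δ * β)) : prim β := by
  obtain ⟨c, d, h1⟩ := h
  simp only [Eis.mul_re, Eis.mul_im] at h1
  exact ⟨c * δ.re + d * δ.im, -(c * δ.im) + d * δ.re - d * δ.im, by linear_combination h1⟩

theorem mul_conj' (α : EisZ) : α * conj α = ofInt (Eis.norm α) := mul_conj α

theorem dvd_or_conj_dvd {α π : EisZ} {p : ℕ} (hπ : Prime π)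
    (hπp : Eis.norm π = (p : ℤ)) (hdvd : (p : ℤ) ∣ Eis.norm α) :
    π ∣ α ∨ conj π ∣ α := by
  have h1 : π ∣ α * conj α := by
    rw [mul_conj']
    obtain ⟨c, hc⟩ := hdvd
    calc π ∣ ofInt (p : ℤ) := ⟨conj π, by rw [← hπp, ← mul_conj']⟩
      _ ∣ ofInt (Eis.norm α) := ⟨ofInt c, by ext <;> simp [hc]⟩
  rcases hπ.dvd_mul.mp h1 with h | h
  · exact Or.inl h
  · right
    have := conj_dvd_conj h
    rwa [conj_conj] at this

theorem not_both_dvd {α π : EisZ} {p : ℕ} (hp : p.Prime) (hα : prim α)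
    (hπ : Prime π) (hπp : Eis.norm π = (p : ℤ)) (hna : ¬ (conj π ∣ π)) :
    ¬ (π ∣ α ∧ conj π ∣ α) := by
  rintro ⟨⟨β, rfl⟩, h2⟩
  have hconj : Prime (conj π) := prime_of_norm_prime hp (by rwa [norm_conj])
  rcases hconj.dvd_mul.mp h2 with h | h
  · exact hna h
  · obtain ⟨γ, rfl⟩ := h
    have : ofInt (p : ℤ) ∣ π * (conj π * γ) := ⟨γ, by rw [← hπp, ← mul_conj']; ring⟩
    refine prim_not_int_dvd hα ?_ this
    rw [Int.isUnit_iff]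
    have := hp.one_lt
    omega

theorem isUnit_conj {u : EisZ} (h : IsUnit u) : IsUnit (conj u) := by
  rw [isUnit_iff_norm] at h ⊢
  rwa [norm_conj]

theorem conj_assoc {σ π : EisZ} (h : Associated σ π) : Associated (conj σ) (conj π) :=
  associated_of_dvd_dvd (conj_dvd_conj h.dvd) (conj_dvd_conj h.symm.dvd)

theorem prim_ne_zero {β : EisZ} (h : prim β) : β ≠ 0 := by
  rintro rfl
  obtain ⟨a, b, hab⟩ := h
  simp at hab

/-- The key primitivity-propagation lemma. -/
theorem prim_mul {π β : EisZ} {p : ℕ} (hp : p.Prime) (hp3 : p % 3 = 1)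
    (hπ : Prime π) (hπp : Eis.norm π = (p : ℤ)) (hβ : prim β)
    (hnc : ¬ (conj π ∣ β))
    (hfac : ∀ q : ℕ, q.Prime → (q : ℤ) ∣ Eis.norm (π * β) → q % 3 = 1) :
    prim (π * β) := by
  by_contra hnp
  have hαne : π * β ≠ 0 := mul_ne_zero hπ.ne_zero (prim_ne_zero hβ)
  have hg : Int.gcd (π * β).re (π * β).im ≠ 1 := fun h =>
    hnp (Int.isCoprime_iff_gcd_eq_one.mpr h)
  have hg0 : Int.gcd (π * β).re (π * β).im ≠ 0 := by
    intro h
    rw [Int.gcd_eq_zero_iff] at h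
    exact hαne (by ext <;> simp [h.1, h.2])
  obtain ⟨q, hq, hqg⟩ := Nat.exists_prime_and_dvd hg
  have hqa : (q : ℤ) ∣ (π * β).re :=
    dvd_trans (Int.natCast_dvd_natCast.mpr hqg) (Int.gcd_dvd_left _ _)
  have hqb : (q : ℤ) ∣ (π * β).im :=
    dvd_trans (Int.natCast_dvd_natCast.mpr hqg) (Int.gcd_dvd_right _ _)
  have hQ : ofInt (q : ℤ) ∣ π * β := ofInt_dvd_iff.mpr ⟨hqa, hqb⟩
  have hqnorm : (q : ℤ) ∣ Eis.norm (π * β) := by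
    have h1 := dvd_norm_dvd hQ
    rw [norm_ofInt] at h1
    exact dvd_trans (Dvd.intro _ rfl) h1
  have hq3 := hfac q hq hqnorm
  obtain ⟨σ, hσn⟩ := exists_norm_eq hq hq3
  have hσ : Prime σ := prime_of_norm_prime hq hσn
  have hσc : Prime (conj σ) := prime_of_norm_prime hq (by rwa [norm_conj])
  have hσna : ¬ (conj σ ∣ σ) := not_conj_dvd hq hq3 hσn
  have hQfac : ofInt (q : ℤ) = σ * conj σ := by rw [← hσn, ← mul_conj']
  have h1 : σ ∣ π * β := dvd_trans ⟨conj σ, hQfac⟩ hQ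
  have h2 : conj σ ∣ π * β := dvd_trans ⟨σ, by rw [hQfac]; ring⟩ hQ
  have hqnotunit : ¬ IsUnit (q : ℤ) := by
    rw [Int.isUnit_iff]
    have := hq.one_lt
    omega
  rcases hσ.dvd_mul.mp h1 with hσπ | hσβ
  · have hassoc : Associated σ π := hσ.irreducible.associated_of_dvd hπ.irreducible hσπ
    rcases hσc.dvd_mul.mp h2 with hcπ | hcβ
    · exact hσna (hcπ.trans hassoc.symm.dvd)
    · exact hnc ((conj_assoc hassoc).symm.dvd.trans hcβ)
  · rcases hσc.dvd_mul.mp h2 with hcπ | hcβ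
    · have hassoc2 : Associated (conj σ) π :=
        hσc.irreducible.associated_of_dvd hπ.irreducible hcπ
      have h5 := conj_assoc hassoc2
      rw [conj_conj] at h5
      exact hnc (h5.symm.dvd.trans hσβ)
    · obtain ⟨γ, hγ⟩ := hσβ
      have h6 : conj σ ∣ γ := by
        rcases hσc.dvd_mul.mp (hγ ▸ hcβ) with h | h
        · exact absurd h hσna
        · exact h
      obtain ⟨ρ, hρ⟩ := h6
      have h7 : ofInt (q : ℤ) ∣ β := ⟨ρ, by rw [hγ, hρ, hQfac]; ring⟩
      exact prim_not_int_dvd hβ hqnotunit h7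


/-! ### The counting sets -/

/-- Primitive elements of a given norm. -/
def W (m : ℕ) : Set EisZ := {α | prim α ∧ Eis.norm α = (m : ℤ)}

theorem W_finite (m : ℕ) : (W m).Finite := by
  have hsub : W m ⊆ (fun p : ℤ × ℤ => (⟨p.1, p.2⟩ : EisZ)) ''
      (Set.Icc (-(2 * (m : ℤ) + 2)) (2 * (m : ℤ) + 2) ×ˢ
       Set.Icc (-(2 * (m : ℤ) + 2)) (2 * (m : ℤ) + 2)) := by
    rintro α ⟨hprim, hnorm⟩
    have h4 : (2 * α.re - α.im) ^ 2 + 3 * α.im ^ 2 = 4 * (m : ℤ) := by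
      simp only [Eis.norm] at hnorm
      linear_combination 4 * hnorm
    have hm0 : (0 : ℤ) ≤ (m : ℤ) := Int.natCast_nonneg m
    have h5 : α.re ^ 2 ≤ (2 * (m:ℤ) + 2) ^ 2 := by
      nlinarith [sq_nonneg (α.re - α.im), sq_nonneg α.im]
    have h6 : α.im ^ 2 ≤ (2 * (m:ℤ) + 2) ^ 2 := by
      nlinarith [sq_nonneg (2 * α.re - α.im), sq_nonneg α.im]
    have h5' := abs_le_of_sq_le_sq' h5 (by linarith)
    have h6' := abs_le_of_sq_le_sq' h6 (by linarith)
    exact ⟨(α.re, α.im), ⟨⟨h5'.1, h5'.2⟩, ⟨h6'.1, h6'.2⟩⟩, by ext <;> simp⟩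
  exact Set.Finite.subset (Set.Finite.image _ (Set.Finite.prod (Set.finite_Icc _ _)
    (Set.finite_Icc _ _))) hsub

theorem W_one : (W 1).ncard = 6 := by
  have hset : W 1 = ↑({⟨1, 0⟩, ⟨-1, 0⟩, ⟨0, 1⟩, ⟨0, -1⟩, ⟨1, 1⟩, ⟨-1, -1⟩} : Finset EisZ) := by
    ext α
    simp only [W, Set.mem_setOf_eq, Finset.coe_insert, Set.mem_insert_iff,
      Finset.coe_singleton, Set.mem_singleton_iff]
    constructor
    · rintro ⟨hprim, hnorm⟩
      obtain ⟨a, b⟩ := α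
      simp only [Eis.norm] at hnorm
      have h4 : (2 * a - b) ^ 2 + 3 * b ^ 2 = 4 := by linear_combination 4 * hnorm
      have hb1 : -1 ≤ b := by nlinarith [sq_nonneg (2 * a - b)]
      have hb2 : b ≤ 1 := by nlinarith [sq_nonneg (2 * a - b)]
      have ha1 : -1 ≤ a := by nlinarith [sq_nonneg (a + b), sq_nonneg (a - b), sq_nonneg b]
      have ha2 : a ≤ 1 := by nlinarith [sq_nonneg (a + b), sq_nonneg (a - b), sq_nonneg b]
      simp only [Eis.mk.injEq]
      interval_cases a <;> interval_cases b <;> omega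
    · intro h
      rcases h with rfl | rfl | rfl | rfl | rfl | rfl
      · exact ⟨⟨1, 0, by norm_num⟩, by simp [Eis.norm]⟩
      · exact ⟨⟨-1, 0, by norm_num⟩, by simp [Eis.norm]⟩
      · exact ⟨⟨0, 1, by norm_num⟩, by simp [Eis.norm]⟩
      · exact ⟨⟨0, -1, by norm_num⟩, by simp [Eis.norm]⟩
      · exact ⟨⟨1, 0, by norm_num⟩, by simp [Eis.norm]⟩
      · exact ⟨⟨-1, 0, by norm_num⟩, by simp [Eis.norm]⟩
  rw [hset, Set.ncard_coe_finset]
  decide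


theorem mem_W_of_factor {m m' p : ℕ} (hm : m = p * m') (hp0 : 0 < p) {α δ β : EisZ}
    (hδ : Eis.norm δ = (p : ℤ)) (hαβ : α = δ * β) (hα : α ∈ W m) : β ∈ W m' := by
  obtain ⟨hprim, hnorm⟩ := hα
  refine ⟨prim_of_mul (hαβ ▸ hprim), ?_⟩
  have h2 : Eis.norm (δ * β) = ((p * m' : ℕ) : ℤ) := by rw [← hαβ, hnorm, hm]
  rw [Eis.norm_mul, hδ] at h2
  push_cast at h2
  exact mul_left_cancel₀ (by exact_mod_cast hp0.ne') h2

theorem delta_split {m p : ℕ} (hp : p.Prime) (hpd : p ∣ m) {π α : EisZ} (hπ : Prime π)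
    (hπn : Eis.norm π = (p : ℤ)) (hna : ¬ (conj π ∣ π)) (hα : α ∈ W m) :
    (π ∣ α ∧ ¬ (conj π ∣ α)) ∨ (conj π ∣ α ∧ ¬ (π ∣ α)) := by
  have hdvd : (p : ℤ) ∣ Eis.norm α := hα.2 ▸ Int.natCast_dvd_natCast.mpr hpd
  have hor := dvd_or_conj_dvd hπ hπn hdvd
  have hnb := not_both_dvd hp hα.1 hπ hπn hna
  tauto

theorem W_card : ∀ m : ℕ, 0 < m → (∀ p : ℕ, p.Prime → p ∣ m → p % 3 = 1) →
    (W m).ncard = 6 * 2 ^ m.primeFactors.card := by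
  intro m
  induction m using Nat.strong_induction_on with
  | _ m ih =>
  intro hm hfac
  by_cases h1 : m = 1
  · subst h1
    simp only [Nat.primeFactors_one, Finset.card_empty, pow_zero, mul_one]
    exact W_one
  · obtain ⟨p, hp, hpd⟩ := Nat.exists_prime_and_dvd h1
    obtain ⟨m', hm'⟩ := hpd
    have hp3 := hfac p hp ⟨m', hm'⟩
    obtain ⟨π, hπn⟩ := exists_norm_eq hp hp3
    have hπ := prime_of_norm_prime hp hπn
    have hπcn : Eis.norm (conj π) = (p : ℤ) := by rwa [norm_conj]
    have hπc : Prime (conj π) := prime_of_norm_prime hp hπcn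
    have hna : ¬ (conj π ∣ π) := not_conj_dvd hp hp3 hπn
    have hna' : ¬ (π ∣ conj π) := by
      have h2 := not_conj_dvd hp hp3 hπcn
      rwa [conj_conj] at h2
    have hm'pos : 0 < m' := by
      rcases Nat.eq_zero_or_pos m' with h | h
      · subst h; simp at hm'; omega
      · exact h
    have hm'lt : m' < m := by
      have := hp.two_le
      calc m' < 2 * m' := by omega
        _ ≤ p * m' := by exact Nat.mul_le_mul_right _ (by omega)
        _ = m := hm'.symm
    have hfac' : ∀ q : ℕ, q.Prime → q ∣ m' → q % 3 = 1 := fun q hq hqd =>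
      hfac q hq (hqd.mul_left p |>.trans (dvd_of_eq hm'.symm) |>.trans dvd_rfl)
    have ihm' := ih m' hm'lt hm'pos hfac'
    have hWm'fin := W_finite m'
    have hnormfac : ∀ β ∈ W m', Eis.norm (π * β) = (m : ℤ) := by
      intro β hβ
      rw [Eis.norm_mul, hπn, hβ.2, hm']
      push_cast
      ring
    have hnormfacc : ∀ β ∈ W m', Eis.norm (conj π * β) = (m : ℤ) := by
      intro β hβ
      rw [Eis.norm_mul, hπcn, hβ.2, hm']
      push_cast
      ring
    have hfacZ : ∀ (γ : EisZ), Eis.norm γ = (m : ℤ) →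
        ∀ q : ℕ, q.Prime → (q : ℤ) ∣ Eis.norm γ → q % 3 = 1 := by
      intro γ hγ q hq hqd
      rw [hγ] at hqd
      exact hfac q hq (Int.natCast_dvd_natCast.mp hqd)
    by_cases hpm' : p ∣ m'
    -- Case B : p divides m'
    · classical
      have hsplit' : ∀ β ∈ W m', (π ∣ β ∧ ¬ (conj π ∣ β)) ∨ (conj π ∣ β ∧ ¬ (π ∣ β)) :=
        fun β hβ => delta_split hp hpm' hπ hπn hna hβ
      have himg : W m = (fun β => (if π ∣ β then π else conj π) * β) '' W m' := by
        ext α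
        constructor
        · intro hα
          rcases delta_split hp ⟨m', hm'⟩ hπ hπn hna hα with ⟨⟨β, hβ⟩, hh⟩ | ⟨⟨β, hβ⟩, hh⟩
          · have hβW : β ∈ W m' := mem_W_of_factor hm' hp.pos hπn hβ hα
            have hπβ : π ∣ β := by
              rcases hsplit' β hβW with h | h
              · exact h.1
              · exfalso
                exact hh (hβ ▸ (h.1.mul_left π))
            exact ⟨β, hβW, by show (if π ∣ β then π else conj π) * β = α; rw [if_pos hπβ, ← hβ]⟩
          · have hβW : β ∈ W m' := mem_W_of_factor hm' hp.pos hπcn hβ hα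
            have hπβ : ¬ (π ∣ β) := by
              intro h
              exact hh (hβ ▸ (h.mul_left (conj π)))
            exact ⟨β, hβW, by show (if π ∣ β then π else conj π) * β = α; rw [if_neg hπβ, ← hβ]⟩
        · rintro ⟨β, hβW, rfl⟩
          show ((if π ∣ β then π else conj π) * β) ∈ W m
          rcases hsplit' β hβW with ⟨h1', h2'⟩ | ⟨h1', h2'⟩
          · rw [if_pos h1']
            refine ⟨prim_mul hp hp3 hπ hπn hβW.1 h2' ?_, hnormfac β hβW⟩
            exact hfacZ _ (hnormfac β hβW)
          · rw [if_neg h2']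
            refine ⟨?_, hnormfacc β hβW⟩
            have hres := prim_mul hp hp3 hπc hπcn hβW.1
              (by rwa [conj_conj]) (hfacZ _ (hnormfacc β hβW))
            exact hres
      have hinj : Set.InjOn (fun β => (if π ∣ β then π else conj π) * β) (W m') := by
        intro β1 hβ1 β2 hβ2 heq
        simp only at heq
        by_cases hd1 : π ∣ β1 <;> by_cases hd2 : π ∣ β2
        · rw [if_pos hd1, if_pos hd2] at heq
          exact mul_left_cancel₀ hπ.ne_zero heq
        · rw [if_pos hd1, if_neg hd2] at heq
          exfalso
          have : π ∣ conj π * β2 := heq ▸ (Dvd.intro β1 rfl)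
          rcases hπ.dvd_mul.mp this with h | h
          · exact hna' h
          · exact hd2 h
        · rw [if_neg hd1, if_pos hd2] at heq
          exfalso
          have : π ∣ conj π * β1 := heq ▸ (Dvd.intro β2 rfl)
          rcases hπ.dvd_mul.mp this with h | h
          · exact hna' h
          · exact hd1 h
        · rw [if_neg hd1, if_neg hd2] at heq
          exact mul_left_cancel₀ hπc.ne_zero heq
      have hpf : m.primeFactors = m'.primeFactors := by
        rw [hm', Nat.primeFactors_mul hp.ne_zero (by omega), hp.primeFactors]
        exact Finset.union_eq_right.mpr
          (Finset.singleton_subset_iff.mpr (Nat.mem_primeFactors.mpr ⟨hp, hpm', by omega⟩))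
      rw [himg, Set.ncard_image_of_injOn hinj, ihm', hpf]
    -- Case A : p does not divide m'
    · have hncβ : ∀ β ∈ W m', ¬ (conj π ∣ β) := by
        intro β hβ h
        have h2 := dvd_norm_dvd h
        rw [hπcn, hβ.2] at h2
        exact hpm' (Int.natCast_dvd_natCast.mp h2)
      have hncβ' : ∀ β ∈ W m', ¬ (π ∣ β) := by
        intro β hβ h
        have h2 := dvd_norm_dvd h
        rw [hπn, hβ.2] at h2
        exact hpm' (Int.natCast_dvd_natCast.mp h2)
      have himg : W m = (fun β => π * β) '' W m' ∪ (fun β => conj π * β) '' W m' := by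
        ext α
        constructor
        · intro hα
          rcases delta_split hp ⟨m', hm'⟩ hπ hπn hna hα with ⟨⟨β, hβ⟩, _⟩ | ⟨⟨β, hβ⟩, _⟩
          · exact Or.inl ⟨β, mem_W_of_factor hm' hp.pos hπn hβ hα, hβ.symm⟩
          · exact Or.inr ⟨β, mem_W_of_factor hm' hp.pos hπcn hβ hα, hβ.symm⟩
        · rintro (⟨β, hβW, rfl⟩ | ⟨β, hβW, rfl⟩)
          · exact ⟨prim_mul hp hp3 hπ hπn hβW.1 (hncβ β hβW)
              (hfacZ _ (hnormfac β hβW)), hnormfac β hβW⟩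
          · refine ⟨?_, hnormfacc β hβW⟩
            have h3 : ¬ (conj (conj π) ∣ β) := by rw [conj_conj]; exact hncβ' β hβW
            exact prim_mul hp hp3 hπc hπcn hβW.1 h3 (hfacZ _ (hnormfacc β hβW))
      have hdisj : Disjoint ((fun β => π * β) '' W m') ((fun β => conj π * β) '' W m') := by
        rw [Set.disjoint_left]
        rintro α ⟨β1, hβ1, h1eq⟩ ⟨β2, hβ2, h2eq⟩
        have h1eq' : π * β1 = α := h1eq
        have h2eq' : conj π * β2 = α := h2eq
        have hprimα : prim α := by
          rw [← h1eq']
          exact prim_mul hp hp3 hπ hπn hβ1.1 (hncβ β1 hβ1) (hfacZ _ (hnormfac β1 hβ1))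
        exact not_both_dvd hp hprimα hπ hπn hna ⟨⟨β1, h1eq'.symm⟩, ⟨β2, h2eq'.symm⟩⟩
      have hpcard : m.primeFactors.card = m'.primeFactors.card + 1 := by
        rw [hm', Nat.primeFactors_mul hp.ne_zero (by omega), hp.primeFactors,
          Finset.card_union_of_disjoint (Finset.disjoint_singleton_left.mpr
            (fun h => hpm' (Nat.dvd_of_mem_primeFactors h))), Finset.card_singleton]
        omega
      rw [himg, Set.ncard_union_eq hdisj (hWm'fin.image _) (hWm'fin.image _),
        Set.ncard_image_of_injective _ (mul_right_injective₀ hπ.ne_zero),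
        Set.ncard_image_of_injective _ (mul_right_injective₀ hπc.ne_zero),
        ihm', hpcard]
      ring


/-! ### Transfer to the form 3x² + 4y² -/

/-- The cube root of unity. -/
def om : EisZ := ⟨0, 1⟩

theorem om_mul (α : EisZ) : om * α = ⟨-α.im, α.re - α.im⟩ := by
  ext <;> simp [om] <;> ring

theorem om_ne_zero : om ≠ 0 := by
  intro h
  exact absurd (congrArg Eis.im h) (by simp [om])

theorem prim_om_mul {α : EisZ} (h : prim α) : prim (om * α) := by
  obtain ⟨c, d, hcd⟩ := h
  rw [om_mul]
  exact ⟨-(c + d), c, by simp; linear_combination hcd⟩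

theorem om_mem_W {m : ℕ} {α : EisZ} (h : α ∈ W m) : om * α ∈ W m := by
  refine ⟨prim_om_mul h.1, ?_⟩
  rw [Eis.norm_mul, h.2]
  have : Eis.norm om = 1 := by simp [om, Eis.norm]
  rw [this, one_mul]

theorem om_cube (α : EisZ) : om * (om * α) = ⟨α.im - α.re, -α.re⟩ := by
  ext <;> simp [om] <;> ring

theorem om_om_om (α : EisZ) : om * (om * (om * α)) = α := by
  ext <;> simp [om] <;> ring

theorem parity_excl {m : ℕ} {α : EisZ} (h : α ∈ W m) : ¬ (2 ∣ α.re ∧ 2 ∣ α.im) := by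
  rintro ⟨h1, h2⟩
  have := h.1.isUnit_of_dvd' h1 h2
  rw [Int.isUnit_iff] at this
  omega

/-- The three parity classes. -/
def Wa (m : ℕ) : Set EisZ := {α ∈ W m | 2 ∣ α.re}
def Wb (m : ℕ) : Set EisZ := {α ∈ W m | 2 ∣ α.im}
def Wc (m : ℕ) : Set EisZ := {α ∈ W m | 2 ∣ α.re - α.im}

theorem om_mul_re (α : EisZ) : (om * α).re = -α.im := by rw [om_mul]
theorem om_mul_im (α : EisZ) : (om * α).im = α.re - α.im := by rw [om_mul]
theorem om_cube_re (α : EisZ) : (om * (om * α)).re = α.im - α.re := by rw [om_cube]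
theorem om_cube_im (α : EisZ) : (om * (om * α)).im = -α.re := by rw [om_cube]

theorem W_eq_union (m : ℕ) : W m = Wa m ∪ Wb m ∪ Wc m := by
  ext α
  constructor
  · intro h
    by_cases h1 : 2 ∣ α.re
    · exact Or.inl (Or.inl ⟨h, h1⟩)
    · by_cases h2 : 2 ∣ α.im
      · exact Or.inl (Or.inr ⟨h, h2⟩)
      · exact Or.inr ⟨h, by omega⟩
  · rintro ((⟨h, _⟩ | ⟨h, _⟩) | ⟨h, _⟩) <;> exact h

theorem Wab_disj (m : ℕ) : Disjoint (Wa m) (Wb m) := by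
  rw [Set.disjoint_left]
  rintro α ⟨h, h1⟩ ⟨_, h2⟩
  exact parity_excl h ⟨h1, h2⟩

theorem Wabc_disj (m : ℕ) : Disjoint (Wa m ∪ Wb m) (Wc m) := by
  rw [Set.disjoint_left]
  rintro α (⟨h, h1⟩ | ⟨h, h1⟩) ⟨h', h2⟩ <;>
    exact parity_excl h (by constructor <;> omega)

theorem om_img_b (m : ℕ) : (fun α => om * α) '' Wb m = Wa m := by
  ext α
  constructor
  · rintro ⟨β, ⟨hβ, h2⟩, rfl⟩
    refine ⟨om_mem_W hβ, ?_⟩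
    simp only [om_mul_re]
    exact dvd_neg.mpr h2
  · rintro ⟨hα, h2⟩
    refine ⟨om * (om * α), ⟨om_mem_W (om_mem_W hα), ?_⟩, om_om_om α⟩
    simp only [om_cube_im]
    exact dvd_neg.mpr h2

theorem om_img_a (m : ℕ) : (fun α => om * α) '' Wa m = Wc m := by
  ext α
  constructor
  · rintro ⟨β, ⟨hβ, h2⟩, rfl⟩
    refine ⟨om_mem_W hβ, ?_⟩
    simp only [om_mul_re, om_mul_im]
    omega
  · rintro ⟨hα, h2⟩
    refine ⟨om * (om * α), ⟨om_mem_W (om_mem_W hα), ?_⟩, om_om_om α⟩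
    simp only [om_cube_re]
    omega



theorem Wb_card (m : ℕ) : 3 * (Wb m).ncard = (W m).ncard := by
  have hfin := W_finite m
  have hfa : (Wa m).Finite := hfin.subset fun α h => h.1
  have hfb : (Wb m).Finite := hfin.subset fun α h => h.1
  have hfc : (Wc m).Finite := hfin.subset fun α h => h.1
  have h1 : (Wa m).ncard = (Wb m).ncard := by
    rw [← om_img_b m, Set.ncard_image_of_injective _ (mul_right_injective₀ om_ne_zero)]
  have h2 : (Wc m).ncard = (Wa m).ncard := by
    rw [← om_img_a m, Set.ncard_image_of_injective _ (mul_right_injective₀ om_ne_zero)]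
  rw [W_eq_union m, Set.ncard_union_eq (Wabc_disj m) (hfa.union hfb) hfc,
    Set.ncard_union_eq (Wab_disj m) hfa hfb]
  omega

end EisZ

theorem stmt_7 (m : ℕ) (hm : 0 < m) (h7 : m % 12 = 7)
    (hdiv : ∀ p : ℕ, p.Prime → p ∣ m → p % 12 = 1 ∨ p % 12 = 7) :
    {xy : ℤ × ℤ | IsCoprime xy.1 xy.2 ∧
        (m : ℤ) = 3 * xy.1 ^ 2 + 4 * xy.2 ^ 2}.ncard =
      2 ^ (m.primeFactors.card + 1) := by
  have hfac3 : ∀ p : ℕ, p.Prime → p ∣ m → p % 3 = 1 := by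
    intro p hp hpd
    rcases hdiv p hp hpd with h | h <;> omega
  have hW := EisZ.W_card m hm hfac3
  have hWb := EisZ.Wb_card m
  set f : ℤ × ℤ → EisZ := fun xy => ⟨xy.1 + 2 * xy.2, 2 * xy.1⟩ with hf
  have hinj : Function.Injective f := by
    rintro ⟨x, y⟩ ⟨x', y'⟩ h
    have h1 : x + 2 * y = x' + 2 * y' := congrArg Eis.re h
    have h2 : 2 * x = 2 * x' := congrArg Eis.im h
    simp only [Prod.mk.injEq]
    omega
  have himg : f '' {xy : ℤ × ℤ | IsCoprime xy.1 xy.2 ∧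
      (m : ℤ) = 3 * xy.1 ^ 2 + 4 * xy.2 ^ 2} = EisZ.Wb m := by
    ext α
    constructor
    · rintro ⟨⟨x, y⟩, ⟨hcop, heq⟩, rfl⟩
      simp only at hcop heq
      have hxodd : ¬ (2 ∣ x) := by
        rintro ⟨k, hk⟩
        have h5 : (m : ℤ) = 2 * (6 * k ^ 2 + 2 * y ^ 2) := by
          rw [hk] at heq
          linear_combination heq
        have h6 : (2 : ℤ) ∣ (m : ℤ) := ⟨_, h5⟩
        have h7' : (2 : ℕ) ∣ m := by exact_mod_cast h6
        omega
      obtain ⟨k, hk⟩ : ∃ k, x = 2 * k + 1 := ⟨(x - 1) / 2, by omega⟩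
      have hc2 : IsCoprime (2 : ℤ) x := ⟨-k, 1, by rw [hk]; ring⟩
      have hc2y : IsCoprime (2 * y) x := hc2.mul_left hcop.symm
      have hcux : IsCoprime (2 * y + 1 * x) x := hc2y.add_mul_right_left 1
      have hcux' : IsCoprime (x + 2 * y) x := by
        have he : 2 * y + 1 * x = x + 2 * y := by ring
        rwa [he] at hcux
      have hu2 : IsCoprime (x + 2 * y) 2 := ⟨1, -(k + y), by rw [hk]; ring⟩
      have hcop2 : IsCoprime (x + 2 * y) (2 * x) := hu2.mul_right hcux'
      refine ⟨⟨hcop2, ?_⟩, ⟨x, rfl⟩⟩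
      show (x + 2 * y) * (x + 2 * y) - (x + 2 * y) * (2 * x) + (2 * x) * (2 * x) = (m : ℤ)
      linear_combination -heq
    · rintro ⟨⟨hprim, hnorm⟩, hv⟩
      obtain ⟨x, hx⟩ := hv
      have hreodd : ¬ (2 ∣ α.re) := by
        intro h
        exact EisZ.parity_excl (show α ∈ EisZ.W m from ⟨hprim, hnorm⟩) ⟨h, ⟨x, hx⟩⟩
      simp only [Eis.norm] at hnorm
      have hm4 : m % 4 = 3 := by omega
      have hxodd : ¬ (2 ∣ x) := by
        rintro ⟨t, ht⟩
        obtain ⟨s, hs⟩ : ∃ s, α.re = 2 * s + 1 := ⟨(α.re - 1) / 2, by omega⟩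
        rw [hs, hx, ht] at hnorm
        have h5 : (4 : ℤ) ∣ (m : ℤ) - 1 :=
          ⟨s * s + s - 2 * s * t - t + 4 * t * t, by linear_combination -hnorm⟩
        omega
      obtain ⟨y, hy⟩ : ∃ y, α.re = x + 2 * y := ⟨(α.re - x) / 2, by omega⟩
      obtain ⟨c, d, hcd⟩ := hprim
      refine ⟨(x, y), ⟨⟨c + 2 * d, 2 * c, ?_⟩, ?_⟩, ?_⟩
      · simp only
        rw [hy, hx] at hcd
        linear_combination hcd
      · simp only
        rw [hy, hx] at hnorm
        linear_combination -hnorm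
      · show (⟨x + 2 * y, 2 * x⟩ : EisZ) = α
        ext
        · rw [← hy]
        · rw [← hx]
  have hS : {xy : ℤ × ℤ | IsCoprime xy.1 xy.2 ∧
      (m : ℤ) = 3 * xy.1 ^ 2 + 4 * xy.2 ^ 2}.ncard = (EisZ.Wb m).ncard := by
    rw [← himg, Set.ncard_image_of_injective _ hinj]
  rw [hS]
  have hpow : (2 : ℕ) ^ (m.primeFactors.card + 1) = 2 ^ m.primeFactors.card * 2 := by ring
  omega
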